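/- Let V be an additive subgroup of (ℤ/2)^{2n} with symplectic orthogonal V⊥, and let B_w and B⊥_w denote the number of weight-w elements of V and V⊥ respectively. Then B⊥_i = (1/|V|) Σ_{j=0}^{n} B_j · K_i(j;n) for every 0 ≤ i ≤ n, where K_i is the quaternary Krawtchouk polynomial. -/

import Mathlib

open Finset Polynomial

/-- An `n`-qubit Pauli operator modulo phase, identified with `(u, v) ∈ (ℤ/2)ⁿ × (ℤ/2)ⁿ`
(corresponding to `Z^u X^v`). -/
abbrev Pauli (n : ℕ) := (Fin n → ZMod 2) × (Fin n → ZMod 2)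

/-- The weight of a Pauli operator: the number of qubits on which it acts nontrivially. -/
def wtP {n : ℕ} (g : Pauli n) : ℕ :=
  (Finset.univ.filter fun i => g.1 i ≠ 0 ∨ g.2 i ≠ 0).card

/-- The symplectic inner product of two Pauli operators. -/
def sip {n : ℕ} (g h : Pauli n) : ZMod 2 :=
  ∑ i, (g.1 i * h.2 i + g.2 i * h.1 i)

/-- Quaternary Krawtchouk polynomial at integer points. -/
noncomputable def kraw (n i x : ℕ) : ℝ :=
  ∑ j ∈ Finset.range (i + 1),
    (-1 : ℝ) ^ j * 3 ^ (i - j) * (x.choose j) * ((n - x).choose (i - j))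

noncomputable def Chi (a : ZMod 2) : ℝ := if a = 0 then 1 else -1
lemma zmod2_sum {M : Type*} [AddCommMonoid M] (f : ZMod 2 → M) : ∑ a, f a = f 0 + f 1 :=
  Fin.sum_univ_two f
lemma zmod2sq_sum {M : Type*} [AddCommMonoid M] (f : ZMod 2 × ZMod 2 → M) :
    ∑ a, f a = f (0,0) + f (0,1) + f (1,0) + f (1,1) := by
  rw [Fintype.sum_prod_type, zmod2_sum (fun x => ∑ y, f (x, y)), zmod2_sum, zmod2_sum]
  abel

-- per-coordinate sum
lemma coord_sum (b c : ZMod 2) :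
    ∑ a : ZMod 2 × ZMod 2, C (Chi (a.1 * c + a.2 * b)) * (X:ℝ[X]) ^ (if a = (0,0) then 0 else 1)
      = if b ≠ 0 ∨ c ≠ 0 then 1 + C (-1:ℝ) * X else 1 + C (3:ℝ) * X := by
  rw [zmod2sq_sum]
  rcases (show ∀ z : ZMod 2, z = 0 ∨ z = 1 by decide) b with rfl | rfl <;>
    rcases (show ∀ z : ZMod 2, z = 0 ∨ z = 1 by decide) c with rfl | rfl <;>
    simp only [mul_one, mul_zero, add_zero, zero_add, show ((1:ZMod 2)+1) = 0 from by decide] <;>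
    norm_num [Chi, map_ofNat] <;> ring

lemma Chi_add (a b : ZMod 2) : Chi (a + b) = Chi a * Chi b := by
  rcases (show ∀ z : ZMod 2, z = 0 ∨ z = 1 by decide) a with rfl | rfl <;>
    rcases (show ∀ z : ZMod 2, z = 0 ∨ z = 1 by decide) b with rfl | rfl <;>
    simp only [add_zero, zero_add, show ((1:ZMod 2)+1) = 0 from by decide] <;> norm_num [Chi]

lemma Chi_sum {ι : Type*} (s : Finset ι) (f : ι → ZMod 2) :
    Chi (∑ i ∈ s, f i) = ∏ i ∈ s, Chi (f i) := by
  induction s using Finset.cons_induction with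
  | empty => simp [Chi]
  | cons a s ha ih => rw [Finset.sum_cons, Finset.prod_cons, Chi_add, ih]

lemma key_poly {n : ℕ} (g : Pauli n) :
    ∑ x : Pauli n, C (Chi (sip x g)) * (X:ℝ[X]) ^ (wtP x)
      = (1 + C (-1 : ℝ) * X) ^ (wtP g) * (1 + C (3:ℝ) * X) ^ (n - wtP g) := by
  classical
  set e : (Fin n → ZMod 2 × ZMod 2) ≃ Pauli n := Equiv.arrowProdEquivProdArrow _ _ _ with he
  rw [← Equiv.sum_comp e (fun x : Pauli n => C (Chi (sip x g)) * (X:ℝ[X]) ^ (wtP x))]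
  have step1 : ∀ f : Fin n → ZMod 2 × ZMod 2,
      C (Chi (sip (e f) g)) * (X:ℝ[X]) ^ (wtP (e f))
        = ∏ t, (C (Chi ((f t).1 * g.2 t + (f t).2 * g.1 t)) *
            (X:ℝ[X]) ^ (if f t = (0,0) then 0 else 1)) := by
    intro f
    have h1 : sip (e f) g = ∑ t, ((f t).1 * g.2 t + (f t).2 * g.1 t) := rfl
    have h2 : wtP (e f) = ∑ t, (if f t = (0,0) then 0 else 1) := by
      have h0 : wtP (e f) = (Finset.univ.filter fun t => (f t).1 ≠ 0 ∨ (f t).2 ≠ 0).card := rfl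
      rw [h0, Finset.card_filter]
      refine Finset.sum_congr rfl fun t _ => ?_
      rcases eq_or_ne (f t) (0,0) with h | h
      · simp [h]
      · have hne : (f t).1 ≠ 0 ∨ (f t).2 ≠ 0 := by
          by_contra hc
          push_neg at hc
          exact h (Prod.ext hc.1 hc.2)
        simp only [if_pos hne]
        rw [if_neg (by simpa using h)]
    rw [h1, h2, Chi_sum, map_prod, ← Finset.prod_pow_eq_pow_sum, ← Finset.prod_mul_distrib]
  simp only [step1]
  have hps := Finset.prod_univ_sum (κ := fun _ : Fin n => ZMod 2 × ZMod 2)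
    (t := fun _ => Finset.univ)
    (f := fun t a => C (Chi (a.1 * g.2 t + a.2 * g.1 t)) *
      (X:ℝ[X]) ^ (if a = (0,0) then 0 else 1))
  rw [Fintype.piFinset_univ] at hps
  rw [← hps]
  have step2 : ∀ t : Fin n,
      (∑ a : ZMod 2 × ZMod 2, C (Chi (a.1 * g.2 t + a.2 * g.1 t)) *
          (X:ℝ[X]) ^ (if a = (0,0) then 0 else 1))
        = if g.1 t ≠ 0 ∨ g.2 t ≠ 0 then 1 + C (-1:ℝ) * X else 1 + C (3:ℝ) * X :=
    fun t => coord_sum (g.1 t) (g.2 t)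
  rw [Finset.prod_congr rfl fun t _ => step2 t, Finset.prod_ite, Finset.prod_const,
    Finset.prod_const]
  congr 1
  have hw : wtP g = (Finset.univ.filter fun t => g.1 t ≠ 0 ∨ g.2 t ≠ 0).card := rfl
  simp only [Finset.filter_not]
  rw [Finset.card_sdiff_of_subset (Finset.filter_subset _ _), Finset.card_univ, Fintype.card_fin, ← hw]

lemma coeff_one_add (a : ℝ) (m j : ℕ) : ((1 + C a * X) ^ m).coeff j = a ^ j * m.choose j := by
  rw [add_comm, add_pow, Polynomial.finset_sum_coeff]
  have key : ∀ k, ((C a * X) ^ k * 1 ^ (m - k) * (m.choose k : ℝ[X])).coeff j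
      = if j = k then a ^ k * m.choose k else 0 := by
    intro k
    rw [one_pow, mul_one, mul_pow, ← C_pow, ← C_eq_natCast, Polynomial.coeff_mul_C,
      Polynomial.coeff_C_mul, Polynomial.coeff_X_pow]
    split <;> simp
  simp only [key]
  rcases le_or_gt j m with h | h
  · rw [Finset.sum_ite_eq (Finset.range (m+1)) j]
    simp [Nat.lt_succ_of_le h]
  · rw [Finset.sum_ite_eq (Finset.range (m+1)) j]
    simp only [Finset.mem_range, Nat.lt_succ_iff, not_le.2 h, if_false]
    rw [Nat.choose_eq_zero_of_lt h]
    simp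

lemma lemB {n : ℕ} (g : Pauli n) (i : ℕ) :
    ∑ x ∈ Finset.univ.filter (fun x : Pauli n => wtP x = i), Chi (sip x g)
      = kraw n i (wtP g) := by
  classical
  have h := congrArg (fun p : ℝ[X] => p.coeff i) (key_poly g)
  simp only [Polynomial.finset_sum_coeff, Polynomial.coeff_C_mul, Polynomial.coeff_X_pow] at h
  rw [Polynomial.coeff_mul] at h
  rw [Finset.Nat.sum_antidiagonal_eq_sum_range_succ_mk] at h
  simp only [coeff_one_add] at h
  have lhs_eq : ∑ x : Pauli n, Chi (sip x g) * (if i = wtP x then (1:ℝ) else 0)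
      = ∑ x ∈ Finset.univ.filter (fun x : Pauli n => wtP x = i), Chi (sip x g) := by
    rw [Finset.sum_filter]
    refine Finset.sum_congr rfl fun x _ => ?_
    by_cases hx : wtP x = i
    · simp [hx]
    · rw [if_neg (fun hh => hx hh.symm), if_neg hx, mul_zero]
  rw [lhs_eq] at h
  rw [h, kraw]
  refine Finset.sum_congr rfl fun j hj => ?_
  ring

lemma sip_add_right {n : ℕ} (x g h : Pauli n) : sip x (g + h) = sip x g + sip x h := by
  unfold sip
  rw [← Finset.sum_add_distrib]
  refine Finset.sum_congr rfl fun i _ => ?_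
  simp only [Prod.fst_add, Prod.snd_add, Pi.add_apply]
  ring

lemma pauli_add_self {n : ℕ} (g : Pauli n) : g + g = 0 := by
  have hz : ∀ a : ZMod 2, a + a = 0 := by decide
  ext t
  · exact hz (g.1 t)
  · exact hz (g.2 t)

lemma lemA {n : ℕ} (V : AddSubgroup (Pauli n)) [DecidablePred (· ∈ V)] (x : Pauli n)
    (hx : ¬ ∀ g ∈ V, sip x g = 0) :
    ∑ g ∈ Finset.univ.filter (· ∈ V), Chi (sip x g) = 0 := by
  push_neg at hx
  obtain ⟨g0, hg0, hs⟩ := hx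
  have hs1 : sip x g0 = 1 := by
    generalize sip x g0 = a at hs ⊢
    fin_cases a
    · exact absurd rfl hs
    · rfl
  have key : ∑ g ∈ Finset.univ.filter (· ∈ V), Chi (sip x g)
      = ∑ g ∈ Finset.univ.filter (· ∈ V), Chi (sip x (g + g0)) := by
    refine Finset.sum_nbij' (fun g => g + g0) (fun g => g + g0) ?_ ?_ ?_ ?_ ?_
    · intro g hg
      simp only [Finset.mem_filter, Finset.mem_univ, true_and] at hg ⊢
      exact V.add_mem hg hg0
    · intro g hg
      simp only [Finset.mem_filter, Finset.mem_univ, true_and] at hg ⊢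
      exact V.add_mem hg hg0
    · intro g _
      show g + g0 + g0 = g
      rw [add_assoc, pauli_add_self, add_zero]
    · intro g _
      show g + g0 + g0 = g
      rw [add_assoc, pauli_add_self, add_zero]
    · intro g _
      show Chi (sip x g) = Chi (sip x (g + g0 + g0))
      rw [add_assoc, pauli_add_self, add_zero]
  have flip : ∀ g : Pauli n, Chi (sip x (g + g0)) = - Chi (sip x g) := by
    intro g
    rw [sip_add_right, Chi_add, hs1]
    simp [Chi]
  rw [Finset.sum_congr rfl (fun g _ => flip g), Finset.sum_neg_distrib] at key
  linarith

/-- MacWilliams identity for an additive subgroup of Pauli operators and its symplectic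
orthogonal. -/
theorem pauli_macwilliams {n : ℕ} (V : AddSubgroup (Pauli n)) (i : ℕ) (hi : i ≤ n) :
    ({x | (∀ g ∈ V, sip x g = 0) ∧ wtP x = i}.ncard : ℝ) =
      (1 / (Nat.card V : ℝ)) *
        ∑ j ∈ Finset.range (n + 1),
          ({x | x ∈ V ∧ wtP x = j}.ncard : ℝ) * kraw n i j := by
  classical
  set VS : Finset (Pauli n) := Finset.univ.filter (· ∈ V) with hVS
  set W : Finset (Pauli n) := Finset.univ.filter (fun x : Pauli n => wtP x = i) with hW
  have hcard : (Nat.card V : ℝ) = (VS.card : ℝ) := by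
    rw [Nat.card_eq_fintype_card, Fintype.card_subtype]
  have hwt : ∀ g : Pauli n, wtP g ≤ n := fun g => by
    simpa [wtP] using (Finset.card_filter_le Finset.univ (fun t => g.1 t ≠ 0 ∨ g.2 t ≠ 0))
  have hB : ∀ j, ({x | x ∈ V ∧ wtP x = j}.ncard : ℝ)
      = ((VS.filter fun g => wtP g = j).card : ℝ) := by
    intro j
    congr 1
    rw [show {x | x ∈ V ∧ wtP x = j} = ↑(VS.filter fun g => wtP g = j) by
      ext x; simp [hVS], Set.ncard_coe_finset]
  have hA : ({x | (∀ g ∈ V, sip x g = 0) ∧ wtP x = i}.ncard : ℝ)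
      = ((W.filter fun x => ∀ g ∈ V, sip x g = 0).card : ℝ) := by
    congr 1
    rw [show {x | (∀ g ∈ V, sip x g = 0) ∧ wtP x = i}
        = ↑(W.filter fun x => ∀ g ∈ V, sip x g = 0) by
      ext x; simp [hW, and_comm], Set.ncard_coe_finset]
  have T1 : ∑ g ∈ VS, ∑ x ∈ W, Chi (sip x g)
      = ∑ j ∈ Finset.range (n+1), ((VS.filter fun g => wtP g = j).card : ℝ) * kraw n i j := by
    rw [Finset.sum_congr rfl (fun g _ => lemB g i)]
    rw [← Finset.sum_fiberwise_of_maps_to (g := fun g : Pauli n => wtP g)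
      (t := Finset.range (n+1)) (fun g _ => Finset.mem_range.2 (Nat.lt_succ_of_le (hwt g)))
      (fun g => kraw n i (wtP g))]
    refine Finset.sum_congr rfl fun j _ => ?_
    rw [Finset.sum_congr rfl (fun g hg => by
      rw [(Finset.mem_filter.1 hg).2]), Finset.sum_const, nsmul_eq_mul]
  have inner : ∀ x ∈ W, ∑ g ∈ VS, Chi (sip x g)
      = if (∀ g ∈ V, sip x g = 0) then (VS.card : ℝ) else 0 := by
    intro x _
    by_cases hx : ∀ g ∈ V, sip x g = 0
    · rw [if_pos hx]
      rw [Finset.sum_congr rfl (fun g hg => show Chi (sip x g) = (1:ℝ) by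
        have hg' : sip x g = 0 := hx g (by simpa [hVS] using hg)
        simp [Chi, hg']), Finset.sum_const, nsmul_eq_mul, mul_one]
    · rw [if_neg hx]; exact lemA V x hx
  have T2 : ∑ x ∈ W, ∑ g ∈ VS, Chi (sip x g)
      = (VS.card : ℝ) * ((W.filter fun x => ∀ g ∈ V, sip x g = 0).card : ℝ) := by
    rw [Finset.sum_congr rfl inner, Finset.sum_ite, Finset.sum_const, Finset.sum_const_zero,
      add_zero, nsmul_eq_mul, mul_comm]
  have main : (VS.card : ℝ) * ((W.filter fun x => ∀ g ∈ V, sip x g = 0).card : ℝ)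
      = ∑ j ∈ Finset.range (n+1), ((VS.filter fun g => wtP g = j).card : ℝ) * kraw n i j := by
    rw [← T2, Finset.sum_comm, T1]
  have hc0 : (VS.card : ℝ) ≠ 0 := by
    have h0 : (0 : Pauli n) ∈ VS := by simp [hVS, V.zero_mem]
    exact Nat.cast_ne_zero.2 (Finset.card_ne_zero_of_mem h0)
  rw [hA, hcard]
  simp only [hB]
  rw [← main, one_div, inv_mul_cancel_left₀ hc0]
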